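/- Let X and Y be n×n real symmetric matrices. Then X = Y⁻¹ with X positive definite if and only if the 2n×2n block matrix [[X, I], [I, Y]] is positive semidefinite and has rank n. -/

import Mathlib

open Matrix

section Aux

variable {R : Type*} [Field R]

lemma aux_finrank_submodule_prod {V W : Type*} [AddCommGroup V] [Module R V]
    [AddCommGroup W] [Module R W] [FiniteDimensional R V] [FiniteDimensional R W]
    (p : Submodule R V) (q : Submodule R W) :
    Module.finrank R (p.prod q) = Module.finrank R p + Module.finrank R q := by
  have e : (p.prod q) ≃ₗ[R] p × q :=
    { toFun := fun x => (⟨x.1.1, x.2.1⟩, ⟨x.1.2, x.2.2⟩)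
      invFun := fun x => ⟨(x.1.1, x.2.1), ⟨x.1.2, x.2.2⟩⟩
      left_inv := fun x => rfl
      right_inv := fun x => rfl
      map_add' := fun x y => rfl
      map_smul' := fun c x => rfl }
  rw [e.finrank_eq, Module.finrank_prod]

lemma aux_range_prodMap {V W V' W' : Type*} [AddCommGroup V] [Module R V]
    [AddCommGroup W] [Module R W] [AddCommGroup V'] [Module R V']
    [AddCommGroup W'] [Module R W'] (f : V →ₗ[R] V') (g : W →ₗ[R] W') :
    LinearMap.range (f.prodMap g) = (LinearMap.range f).prod (LinearMap.range g) := by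
  ext ⟨u, v⟩
  constructor
  · rintro ⟨⟨a, b⟩, h⟩
    exact ⟨⟨a, congrArg Prod.fst h⟩, ⟨b, congrArg Prod.snd h⟩⟩
  · rintro ⟨⟨a, ha⟩, ⟨b, hb⟩⟩
    exact ⟨⟨a, b⟩, Prod.ext ha hb⟩

lemma aux_rank_fromBlocks_diag {m n' : Type*} [Fintype m] [Fintype n'] [DecidableEq m]
    [DecidableEq n'] (A : Matrix m m R) (D : Matrix n' n' R) :
    (Matrix.fromBlocks A 0 0 D).rank = A.rank + D.rank := by
  classical
  set e := LinearEquiv.sumArrowLequivProdArrow m n' R R with he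
  have key : (Matrix.fromBlocks A 0 0 D).mulVecLin =
      (e.symm.toLinearMap.comp ((A.mulVecLin.prodMap D.mulVecLin).comp e.toLinearMap)) := by
    apply LinearMap.ext
    intro x
    funext i
    cases i <;>
      simp [e, Matrix.fromBlocks_mulVec, LinearEquiv.sumArrowLequivProdArrow,
        Equiv.sumArrowEquivProdArrow]
  have hrange : LinearMap.range (Matrix.fromBlocks A 0 0 D).mulVecLin =
      Submodule.map (e.symm : ((m → R) × (n' → R)) →ₗ[R] (m ⊕ n' → R))
        ((LinearMap.range A.mulVecLin).prod (LinearMap.range D.mulVecLin)) := by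
    rw [key, LinearMap.range_comp, LinearMap.range_comp, LinearEquiv.range,
      Submodule.map_top, aux_range_prodMap]
  rw [Matrix.rank, hrange, LinearEquiv.finrank_map_eq, aux_finrank_submodule_prod,
    Matrix.rank, Matrix.rank]

lemma aux_rank_eq_zero {m n' : Type*} [Fintype n'] (A : Matrix m n' R)
    (h : A.rank = 0) : A = 0 := by
  classical
  have : LinearMap.range A.mulVecLin = ⊥ := by
    have := Submodule.finrank_eq_zero (R := R) (S := LinearMap.range A.mulVecLin)
    exact this.mp h
  have hz : ∀ x, A *ᵥ x = 0 := by
    intro x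
    have hmem : A.mulVecLin x ∈ LinearMap.range A.mulVecLin := LinearMap.mem_range_self _ x
    rw [this] at hmem
    simpa using hmem
  ext i j
  have := congrFun (hz (Pi.single j 1)) i
  simpa [Matrix.mulVec_single] using this

end Aux

theorem stmt_15 (n : ℕ) (X Y : Matrix (Fin n) (Fin n) ℝ)
    (hX : X.IsSymm) (hY : Y.IsSymm) :
    (X = Y⁻¹ ∧ X.PosDef) ↔
      ((Matrix.fromBlocks X 1 1 Y).PosSemidef ∧
        (Matrix.fromBlocks X 1 1 Y).rank = n) := by
  classical
  constructor
  · rintro ⟨rfl, hXpd⟩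
    have hYpd : Y.PosDef := Matrix.posDef_inv_iff.mp hXpd
    have hYdet : IsUnit Y.det := isUnit_iff_ne_zero.mpr hYpd.det_pos.ne'
    haveI : Invertible Y := Y.invertibleOfIsUnitDet hYdet
    constructor
    · have h1 : (Matrix.fromBlocks Y⁻¹ (1 : Matrix (Fin n) (Fin n) ℝ)
          (1 : Matrix (Fin n) (Fin n) ℝ)ᴴ Y).PosSemidef := by
        rw [Matrix.PosDef.fromBlocks₂₂ _ _ hYpd]
        simpa using Matrix.PosSemidef.zero
      rwa [Matrix.conjTranspose_one] at h1
    · have hfact := Matrix.fromBlocks_eq_of_invertible₂₂ Y⁻¹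
        (1 : Matrix (Fin n) (Fin n) ℝ) (1 : Matrix (Fin n) (Fin n) ℝ) Y
      have hinv : (⅟Y : Matrix (Fin n) (Fin n) ℝ) = Y⁻¹ := invOf_eq_nonsing_inv Y
      have hmid : Y⁻¹ - 1 * ⅟Y * 1 = (0 : Matrix (Fin n) (Fin n) ℝ) := by
        rw [hinv]; simp
      rw [hfact, hmid]
      rw [Matrix.rank_mul_eq_left_of_isUnit_det _ _
        (by simp [Matrix.det_fromBlocks_zero₂₁]),
        Matrix.rank_mul_eq_right_of_isUnit_det _ _
        (by simp [Matrix.det_fromBlocks_zero₁₂]),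
        aux_rank_fromBlocks_diag, Matrix.rank_zero,
        Matrix.rank_of_isUnit Y hYpd.isUnit]
      simp
  · rintro ⟨hpsd, hrank⟩
    have hXsub : (Matrix.fromBlocks X 1 1 Y).submatrix Sum.inl Sum.inl = X := by
      ext i j; rfl
    have hYsub : (Matrix.fromBlocks X 1 1 Y).submatrix Sum.inr Sum.inr = Y := by
      ext i j; rfl
    have hXsd : X.PosSemidef := hXsub ▸ hpsd.submatrix Sum.inl
    have hYsd : Y.PosSemidef := hYsub ▸ hpsd.submatrix Sum.inr
    -- kernel of X is trivial
    have hker : ∀ u : Fin n → ℝ, X *ᵥ u = 0 → u = 0 := by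
      intro u hu
      by_contra hne
      have ha : 0 < u ⬝ᵥ u := by
        rcases lt_or_eq_of_le (Finset.sum_nonneg fun i _ => mul_self_nonneg (u i)) with h | h
        · exact h
        · exact absurd (dotProduct_self_eq_zero.mp h.symm) hne
      have hc : 0 ≤ u ⬝ᵥ Y *ᵥ u := by
        have := hYsd.dotProduct_mulVec_nonneg u
        simpa using this
      set a := u ⬝ᵥ u with hadef
      set c := u ⬝ᵥ Y *ᵥ u with hcdef
      have hc1 : (0:ℝ) < c + 1 := by linarith
      set t := a / (c + 1) with htdef
      have ht : 0 < t := div_pos ha hc1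
      have hq := hpsd.dotProduct_mulVec_nonneg (Sum.elim u (-(t • u)))
      have hmv : (Matrix.fromBlocks X 1 1 Y) *ᵥ (Sum.elim u (-(t • u))) =
          Sum.elim (X *ᵥ u + (-(t • u))) (u + Y *ᵥ (-(t • u))) := by
        simp [Matrix.fromBlocks_mulVec]
      rw [hmv] at hq
      have hstar : star (Sum.elim u (-(t • u))) = Sum.elim u (-(t • u)) := by
        exact star_trivial _
      rw [hstar] at hq
      have hq' : 0 ≤ u ⬝ᵥ (X *ᵥ u + (-(t • u))) +
          (-(t • u)) ⬝ᵥ (u + Y *ᵥ (-(t • u))) := by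
        simpa [dotProduct, Fintype.sum_sum_type] using hq
      have hexp : u ⬝ᵥ (X *ᵥ u + (-(t • u))) + (-(t • u)) ⬝ᵥ (u + Y *ᵥ (-(t • u)))
          = -2 * t * a + t ^ 2 * c := by
        rw [hu]
        simp only [Matrix.mulVec_neg, Matrix.mulVec_smul, dotProduct_add,
          add_dotProduct, dotProduct_neg, neg_dotProduct,
          dotProduct_smul, smul_dotProduct, smul_eq_mul, ← hadef, ← hcdef,
          dotProduct_zero]
        ring
      rw [hexp, htdef] at hq'
      have hneg : -2 * (a / (c + 1)) * a + (a / (c + 1)) ^ 2 * c < 0 := by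
        have heq : -2 * (a / (c + 1)) * a + (a / (c + 1)) ^ 2 * c
            = a ^ 2 * (-c - 2) / (c + 1) ^ 2 := by
          field_simp
          ring
        rw [heq]
        apply div_neg_of_neg_of_pos
        · nlinarith
        · positivity
      linarith
    have hXpd : X.PosDef := by
      refine Matrix.PosDef.of_dotProduct_mulVec_pos hXsd.1 (fun x hx => ?_)
      rcases lt_or_eq_of_le (hXsd.dotProduct_mulVec_nonneg x) with h | h
      · exact h
      · exact absurd (hker x ((hXsd.dotProduct_mulVec_zero_iff x).mp h.symm)) hx
    have hXdet : IsUnit X.det := isUnit_iff_ne_zero.mpr hXpd.det_pos.ne'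
    haveI : Invertible X := X.invertibleOfIsUnitDet hXdet
    have hfact := Matrix.fromBlocks_eq_of_invertible₁₁ X
      (1 : Matrix (Fin n) (Fin n) ℝ) (1 : Matrix (Fin n) (Fin n) ℝ) Y
    have hinv : (⅟X : Matrix (Fin n) (Fin n) ℝ) = X⁻¹ := invOf_eq_nonsing_inv X
    have hmid : Y - 1 * ⅟X * 1 = Y - X⁻¹ := by rw [hinv]; simp
    rw [hfact, hmid] at hrank
    rw [Matrix.rank_mul_eq_left_of_isUnit_det _ _
      (by simp [Matrix.det_fromBlocks_zero₂₁]),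
      Matrix.rank_mul_eq_right_of_isUnit_det _ _
      (by simp [Matrix.det_fromBlocks_zero₁₂]),
      aux_rank_fromBlocks_diag, Matrix.rank_of_isUnit X hXpd.isUnit] at hrank
    have hS0 : Y - X⁻¹ = 0 := by
      apply aux_rank_eq_zero
      have hcard : Fintype.card (Fin n) = n := Fintype.card_fin n
      omega
    have hYX : Y = X⁻¹ := by
      have := sub_eq_zero.mp hS0
      exact this
    refine ⟨?_, hXpd⟩
    rw [hYX, Matrix.nonsing_inv_nonsing_inv X hXdet]
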